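/- Suppose (U_g)_{g∈Γ} is a family of isometries on a Hilbert space K satisfying U_g*U_{g'} = δ_{g,g'}·1 and Σ_g U_gU_g* = 1 (strongly), with the equivariance property U_g ρ_h = ρ_h U_{h⁻¹g} for a unitary representation ρ of Γ. Let E, E' be unitary representations of Γ on K ⊗ H and K ⊗ H' obtained from ρ tensored with given representations, and let V : H' → H be any isometry, c : Z' → [0,1] a cutoff function with Σ_g g·c = 1 and locally finitely many nonzero translates. Then the operator W := Σ_g (U_g ⊗ 1) E_g (1 ⊗ V π'(√c)) E'_{g⁻¹} is a Γ-equivariant isometry: W E'_h = E_h W for all h ∈ Γ, and W*W = 1. -/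

import Mathlib

open scoped Classical

open ContinuousLinearMap

private lemma inner_of_isometry_aux {K K' : Type*}
    [NormedAddCommGroup K] [InnerProductSpace ℂ K] [CompleteSpace K]
    [NormedAddCommGroup K'] [InnerProductSpace ℂ K'] [CompleteSpace K']
    (A : K' →L[ℂ] K) (h : adjoint A ∘L A = 1) (x y : K') :
    (inner ℂ (A x) (A y) : ℂ) = inner ℂ x y := by
  rw [← ContinuousLinearMap.adjoint_inner_right]
  have : adjoint A (A y) = (adjoint A ∘L A) y := rfl
  rw [this, h]
  rfl

/-- Averaging construction of an equivariant isometry: let `E, E'` be unitary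
representations of a group `Γ` on Hilbert spaces `K, K'`, `(U_g)` a family of isometries
on `K` with mutually orthogonal ranges summing strongly to `1` and satisfying the
equivariance `U_g E_h = E_h U_{h⁻¹g}`, `V : K' → K` an isometry, and `N` a self-adjoint
"square root of a cutoff" with `Σ_g E'_g N² E'_{g⁻¹} = 1` strongly. Then the operator
`W = Σ_g U_g E_g (V N) E'_{g⁻¹}` is a Γ-equivariant isometry: `W*W = 1` and
`W E'_h = E_h W` for all `h ∈ Γ`. -/
theorem averaged_covering_isometry_equivariant
    {Γ : Type*} [Group Γ]
    {K K' : Type*}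
    [NormedAddCommGroup K] [InnerProductSpace ℂ K] [CompleteSpace K]
    [NormedAddCommGroup K'] [InnerProductSpace ℂ K'] [CompleteSpace K']
    -- unitary representations E of Γ on K and E' on K'
    (E : Γ → K →L[ℂ] K) (E' : Γ → K' →L[ℂ] K')
    (hE1 : E 1 = 1) (hEmul : ∀ g h : Γ, E (g * h) = E g ∘L E h)
    (hEadj : ∀ g : Γ, adjoint (E g) = E g⁻¹)
    (hE'1 : E' 1 = 1) (hE'mul : ∀ g h : Γ, E' (g * h) = E' g ∘L E' h)
    (hE'adj : ∀ g : Γ, adjoint (E' g) = E' g⁻¹)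
    -- the family (U_g) of isometries with orthogonal ranges
    (U : Γ → K →L[ℂ] K)
    (hUorth : ∀ g g' : Γ, adjoint (U g) ∘L U g' = if g = g' then (1 : K →L[ℂ] K) else 0)
    (hUsum : ∀ v : K, HasSum (fun g : Γ => U g (adjoint (U g) v)) v)
    (hUequiv : ∀ g h : Γ, U g ∘L E h = E h ∘L U (h⁻¹ * g))
    -- the isometry V and the cutoff operator N (playing π'(√c))
    (V : K' →L[ℂ] K) (hV : adjoint V ∘L V = 1)
    (N : K' →L[ℂ] K') (hN : IsSelfAdjoint N)
    (hcutoff : ∀ v : K', HasSum (fun g : Γ => E' g (N (N (E' g⁻¹ v)))) v)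
    -- W is the averaged operator Σ_g U_g E_g V N E'_{g⁻¹}
    (W : K' →L[ℂ] K)
    (hW : ∀ v : K', HasSum (fun g : Γ => U g (E g (V (N (E' g⁻¹ v))))) (W v)) :
    adjoint W ∘L W = 1 ∧ ∀ h : Γ, W ∘L E' h = E h ∘L W := by
  -- the g-th term of the sum defining W
  set T : Γ → K' → K := fun g v => U g (E g (V (N (E' g⁻¹ v)))) with hT
  -- isometry properties of the pieces
  have hEiso : ∀ g : Γ, adjoint (E g) ∘L E g = 1 := by
    intro g; rw [hEadj, ← hEmul, inv_mul_cancel, hE1]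
  have hNadj : adjoint N = N := hN
  -- inner ℂ products of terms
  have hterm : ∀ (g g' : Γ) (v w : K'),
      (inner ℂ (T g v) (T g' w) : ℂ) =
        if g = g' then inner ℂ v (E' g (N (N (E' g⁻¹ w)))) else 0 := by
    intro g g' v w
    have h1 : (inner ℂ (T g v) (T g' w) : ℂ)
        = inner ℂ (E g (V (N (E' g⁻¹ v))))
            ((adjoint (U g) ∘L U g') (E g' (V (N (E' g'⁻¹ w))))) := by
      rw [ContinuousLinearMap.comp_apply, ContinuousLinearMap.adjoint_inner_right]
    rw [h1, hUorth]
    by_cases hgg : g = g'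
    · subst hgg
      rw [if_pos rfl, if_pos rfl, ContinuousLinearMap.one_apply]
      rw [inner_of_isometry_aux (E g) (hEiso g), inner_of_isometry_aux V hV]
      have h2 : (inner ℂ (N (E' g⁻¹ v)) (N (E' g⁻¹ w)) : ℂ)
          = inner ℂ (E' g⁻¹ v) (N (N (E' g⁻¹ w))) := by
        rw [← ContinuousLinearMap.adjoint_inner_right, hNadj]
      rw [h2, ← ContinuousLinearMap.adjoint_inner_right, hE'adj, inv_inv]
    · simp [hgg]
  constructor
  · -- W*W = 1
    ext w
    refine ext_inner_left ℂ (fun v => ?_)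
    have key : (inner ℂ (W v) (W w) : ℂ) = inner ℂ v w := by
      -- for fixed g, sum over g'
      have hA : ∀ g : Γ, (inner ℂ (T g v) (W w) : ℂ)
          = inner ℂ v (E' g (N (N (E' g⁻¹ w)))) := by
        intro g
        have := ((hW w).mapL (innerSL ℂ (T g v)))
        have hsingle : HasSum (fun g' : Γ => (inner ℂ (T g v) (T g' w) : ℂ))
            (inner ℂ v (E' g (N (N (E' g⁻¹ w)))) : ℂ) := by
          have hs := hasSum_ite_eq g (inner ℂ v (E' g (N (N (E' g⁻¹ w)))) : ℂ)
          exact hs.congr_fun fun g' =>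
            (hterm g g' v w).trans (if_congr eq_comm rfl rfl)
        exact HasSum.unique (this) hsingle
      -- sum over g of inner ℂ (T g v) (W w)
      have hB : HasSum (fun g : Γ => (inner ℂ (T g v) (W w) : ℂ)) (inner ℂ (W v) (W w)) := by
        have := ((hW v).mapL (innerSL ℂ (W w))).star
        simpa [inner_conj_symm] using this
      have hC : HasSum (fun g : Γ => (inner ℂ v (E' g (N (N (E' g⁻¹ w)))) : ℂ))
          (inner ℂ v w) := (hcutoff w).mapL (innerSL ℂ v)
      exact HasSum.unique (hB.congr_fun fun g => (hA g).symm) hC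
    rw [ContinuousLinearMap.comp_apply, ContinuousLinearMap.adjoint_inner_right, key]
    simp
  · -- equivariance
    intro h
    ext v
    simp only [ContinuousLinearMap.comp_apply]
    have h1 : HasSum (fun g : Γ => E h (T g v)) (E h (W v)) := (hW v).mapL (E h)
    have h2' := ((Equiv.mulLeft (h⁻¹ : Γ)).hasSum_iff (f := fun g : Γ => E h (T g v))
      (a := E h (W v))).mpr h1
    have h2 : HasSum (fun g : Γ => E h (T (h⁻¹ * g) v)) (E h (W v)) :=
      h2'.congr_fun fun g => by simp [Function.comp, Equiv.coe_mulLeft]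
    have h3 : ∀ g : Γ, T g (E' h v) = E h (T (h⁻¹ * g) v) := by
      intro g
      have e1 : E' g⁻¹ (E' h v) = E' (h⁻¹ * g)⁻¹ v := by
        rw [mul_inv_rev, inv_inv, hE'mul]; rfl
      have e2 : E g = E h ∘L E (h⁻¹ * g) := by
        rw [← hEmul, mul_inv_cancel_left]
      have e3 : U g (E h (E (h⁻¹ * g) (V (N (E' (h⁻¹ * g)⁻¹ v)))))
          = E h (U (h⁻¹ * g) (E (h⁻¹ * g) (V (N (E' (h⁻¹ * g)⁻¹ v))))) := by
        have := congrArg (fun (A : K →L[ℂ] K) => A (E (h⁻¹ * g) (V (N (E' (h⁻¹ * g)⁻¹ v)))))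
          (hUequiv g h)
        simpa using this
      simp only [hT, e1, e2, ContinuousLinearMap.comp_apply, e3]
    have h4 : HasSum (fun g : Γ => T g (E' h v)) (E h (W v)) :=
      h2.congr_fun h3
    exact HasSum.unique (hW (E' h v)) h4
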